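/- Let u, v, w be positive real numbers, let r be the unique positive real solution of (2/(uvw))·r³ + (1/u² + 1/v² + 1/w²)·r² − 1 = 0, and set a = √(v² − r²) + √(w² − r²), b = √(u² − r²) + √(w² − r²), c = √(u² − r²) + √(v² − r²). Then there exist three non-collinear points A, B, C in the Euclidean plane ℝ² with dist(B,C) = a, dist(C,A) = b, dist(A,B) = c, and for any such triangle, its incenter I satisfies dist(A,I) = u, dist(B,I) = v and dist(C,I) = w. In particular, for every u, v, w > 0 there exists a triangle whose incenter is at distances u, v, w from its three vertices. -/

import Mathlib

open scoped RealInnerProductSpace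

/-- The incenter of the triangle with vertices `A`, `B`, `C`, given by its standard
barycentric formula with weights the opposite side lengths. -/
noncomputable def triangleIncenter (A B C : EuclideanSpace ℝ (Fin 2)) :
    EuclideanSpace ℝ (Fin 2) :=
  (dist B C / (dist B C + dist C A + dist A B)) • A +
    (dist C A / (dist B C + dist C A + dist A B)) • B +
    (dist A B / (dist B C + dist C A + dist A B)) • C

lemma eq_of_sq_eq' {a b : ℝ} (ha : 0 ≤ a) (hb : 0 ≤ b) (h : a ^ 2 = b ^ 2) : a = b := by
  rw [← Real.sqrt_sq ha, ← Real.sqrt_sq hb, h]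

lemma incenter_cyclic (A B C : EuclideanSpace ℝ (Fin 2)) :
    triangleIncenter A B C = triangleIncenter B C A := by
  unfold triangleIncenter
  rw [show dist C A + dist A B + dist B C = dist B C + dist C A + dist A B by ring]
  abel

lemma incenter_sub (A B C : EuclideanSpace ℝ (Fin 2))
    (hP : dist B C + dist C A + dist A B ≠ 0) :
    triangleIncenter A B C - A =
      (dist C A / (dist B C + dist C A + dist A B)) • (B - A) +
      (dist A B / (dist B C + dist C A + dist A B)) • (C - A) := by
  unfold triangleIncenter
  match_scalars <;> (field_simp; try ring)

lemma dist_incenter_sq (A B C : EuclideanSpace ℝ (Fin 2))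
    (ha : 0 < dist B C) (hb : 0 < dist C A) (hc : 0 < dist A B) :
    dist A (triangleIncenter A B C) ^ 2 =
      dist C A * dist A B * (dist C A + dist A B - dist B C) /
        (dist B C + dist C A + dist A B) := by
  set a := dist B C with hadef
  set b := dist C A with hbdef
  set c := dist A B with hcdef
  have hP : (0:ℝ) < a + b + c := by linarith
  have hs := incenter_sub A B C (by linarith)
  have hinner : (⟪B - A, C - A⟫) = (c ^ 2 + b ^ 2 - a ^ 2) / 2 := by
    have h := norm_sub_sq_real (B - A) (C - A)
    have h2 : (B - A) - (C - A) = B - C := by abel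
    rw [h2] at h
    rw [hadef, hbdef, hcdef, dist_eq_norm, dist_eq_norm, dist_eq_norm, norm_sub_rev A B]
    linarith
  have hBA : ‖B - A‖ = c := by rw [hcdef, dist_eq_norm, norm_sub_rev]
  have hCA : ‖C - A‖ = b := by rw [hbdef, dist_eq_norm]
  have hd : dist A (triangleIncenter A B C) = ‖triangleIncenter A B C - A‖ := by
    rw [dist_eq_norm, norm_sub_rev]
  rw [hd, hs, ← hadef, ← hbdef, ← hcdef]
  rw [norm_add_sq_real, norm_smul, norm_smul, real_inner_smul_left, real_inner_smul_right,
    hinner, hBA, hCA, Real.norm_eq_abs, Real.norm_eq_abs,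
    abs_of_nonneg (by positivity : (0:ℝ) ≤ b / (a + b + c)),
    abs_of_nonneg (by positivity : (0:ℝ) ≤ c / (a + b + c))]
  field_simp
  ring

lemma exists_triangle' (a b c : ℝ) (ha : 0 < a) (hb : 0 < b) (hc : 0 < c)
    (h1 : a < b + c) (h2 : b < a + c) (h3 : c < a + b) :
    ∃ A B C : EuclideanSpace ℝ (Fin 2),
      ¬ Collinear ℝ ({A, B, C} : Set (EuclideanSpace ℝ (Fin 2))) ∧
      dist B C = a ∧ dist C A = b ∧ dist A B = c := by
  set p : ℝ := (a ^ 2 + c ^ 2 - b ^ 2) / (2 * a) with hp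
  have hap : 2 * a * p = a ^ 2 + c ^ 2 - b ^ 2 := by
    rw [hp]; field_simp
  have hq2 : 0 < c ^ 2 - p ^ 2 := by
    have key : c ^ 2 - p ^ 2 = ((b - a + c) * (b + a - c) * ((a + c) - b) * ((a + c) + b)) / (4 * a ^ 2) := by
      rw [hp]; field_simp; ring
    rw [key]
    have f1 : (0:ℝ) < b - a + c := by linarith
    have f2 : (0:ℝ) < b + a - c := by linarith
    have f3 : (0:ℝ) < (a + c) - b := by linarith
    have f4 : (0:ℝ) < (a + c) + b := by linarith
    have f5 : (0:ℝ) < 4 * a ^ 2 := by positivity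
    exact div_pos (mul_pos (mul_pos (mul_pos f1 f2) f3) f4) f5
  set q : ℝ := Real.sqrt (c ^ 2 - p ^ 2) with hqdef
  have hq : 0 < q := Real.sqrt_pos.2 hq2
  have hqsq : q ^ 2 = c ^ 2 - p ^ 2 := Real.sq_sqrt hq2.le
  refine ⟨!₂[p, q], !₂[0, 0], !₂[a, 0], ?_, ?_, ?_, ?_⟩
  · intro hcol
    have hmem : (!₂[0, 0] : EuclideanSpace ℝ (Fin 2)) ∈ ({!₂[p,q], !₂[0,0], !₂[a,0]} : Set (EuclideanSpace ℝ (Fin 2))) := by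
      simp
    rw [collinear_iff_of_mem hmem] at hcol
    obtain ⟨v, hv⟩ := hcol
    obtain ⟨cA, hA⟩ := hv !₂[p, q] (by simp)
    obtain ⟨cC, hC⟩ := hv !₂[a, 0] (by simp)
    have hA1 : q = cA * v 1 := by
      have := congrArg (· 1) hA
      simpa [vadd_eq_add, PiLp.add_apply, PiLp.smul_apply, smul_eq_mul] using this
    have hC0 : a = cC * v 0 := by
      have := congrArg (· 0) hC
      simpa [vadd_eq_add, PiLp.add_apply, PiLp.smul_apply, smul_eq_mul] using this
    have hC1 : (0:ℝ) = cC * v 1 := by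
      have := congrArg (· 1) hC
      simpa [vadd_eq_add, PiLp.add_apply, PiLp.smul_apply, smul_eq_mul] using this
    have hcC : cC ≠ 0 := by rintro rfl; rw [zero_mul] at hC0; linarith
    have hv1 : v 1 = 0 := by
      rcases mul_eq_zero.1 hC1.symm with h | h
      · exact absurd h hcC
      · exact h
    rw [hv1, mul_zero] at hA1
    linarith
  · rw [EuclideanSpace.dist_eq]
    simp only [Fin.sum_univ_two, Real.dist_eq, sq_abs, Matrix.cons_val_zero, Matrix.cons_val_one,
      Matrix.head_cons]
    rw [show (0 - a) ^ 2 + ((0:ℝ) - 0) ^ 2 = a ^ 2 by ring, Real.sqrt_sq ha.le]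
  · rw [EuclideanSpace.dist_eq]
    simp only [Fin.sum_univ_two, Real.dist_eq, sq_abs, Matrix.cons_val_zero, Matrix.cons_val_one,
      Matrix.head_cons]
    rw [show (a - p) ^ 2 + ((0:ℝ) - q) ^ 2 = b ^ 2 by linear_combination hqsq - hap,
      Real.sqrt_sq hb.le]
  · rw [EuclideanSpace.dist_eq]
    simp only [Fin.sum_univ_two, Real.dist_eq, sq_abs, Matrix.cons_val_zero, Matrix.cons_val_one,
      Matrix.head_cons]
    rw [show (p - 0) ^ 2 + (q - (0:ℝ)) ^ 2 = c ^ 2 by linear_combination hqsq,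
      Real.sqrt_sq hc.le]

set_option maxHeartbeats 1000000 in
theorem incenter_distances_to_vertices (u v w r : ℝ)
    (hu : 0 < u) (hv : 0 < v) (hw : 0 < w) (hr : 0 < r)
    (heq : 2 / (u * v * w) * r ^ 3 + (1 / u ^ 2 + 1 / v ^ 2 + 1 / w ^ 2) * r ^ 2 - 1 = 0) :
    let a := Real.sqrt (v ^ 2 - r ^ 2) + Real.sqrt (w ^ 2 - r ^ 2)
    let b := Real.sqrt (u ^ 2 - r ^ 2) + Real.sqrt (w ^ 2 - r ^ 2)
    let c := Real.sqrt (u ^ 2 - r ^ 2) + Real.sqrt (v ^ 2 - r ^ 2)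
    (∃ A B C : EuclideanSpace ℝ (Fin 2),
      ¬ Collinear ℝ ({A, B, C} : Set (EuclideanSpace ℝ (Fin 2))) ∧
      dist B C = a ∧ dist C A = b ∧ dist A B = c) ∧
    (∀ A B C : EuclideanSpace ℝ (Fin 2),
      ¬ Collinear ℝ ({A, B, C} : Set (EuclideanSpace ℝ (Fin 2))) →
      dist B C = a → dist C A = b → dist A B = c →
      dist A (triangleIncenter A B C) = u ∧ dist B (triangleIncenter A B C) = v ∧
        dist C (triangleIncenter A B C) = w) := by
  have hu' := hu.ne'
  have hv' := hv.ne'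
  have hw' := hw.ne'
  have hE : u^2*v^2*w^2 = 2*r^3*(u*v*w) + r^2*(u^2*v^2 + v^2*w^2 + u^2*w^2) := by
    field_simp at heq
    linear_combination -heq
  -- r < u, v, w
  have hposE : (0:ℝ) < 2*r^3*(u*v*w) := by positivity
  have hru2 : r^2 < u^2 := by
    have h0 : v^2 * (u^2*w^2 - r^2*u^2 - r^2*w^2) = 2*r^3*(u*v*w) + r^2*(u^2*w^2) := by
      linear_combination hE
    have hpos : 0 < v^2 * (u^2*w^2 - r^2*u^2 - r^2*w^2) := by rw [h0]; positivity
    have h1 : 0 < u^2*w^2 - r^2*u^2 - r^2*w^2 := by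
      by_contra h
      push_neg at h
      nlinarith [hpos, sq_nonneg v]
    nlinarith [h1, sq_nonneg w, mul_pos hr hu, sq_nonneg (r*u)]
  have hrv2 : r^2 < v^2 := by
    have h0 : u^2 * (v^2*w^2 - r^2*v^2 - r^2*w^2) = 2*r^3*(u*v*w) + r^2*(v^2*w^2) := by
      linear_combination hE
    have hpos : 0 < u^2 * (v^2*w^2 - r^2*v^2 - r^2*w^2) := by rw [h0]; positivity
    have h1 : 0 < v^2*w^2 - r^2*v^2 - r^2*w^2 := by
      by_contra h
      push_neg at h
      nlinarith [hpos, sq_nonneg u]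
    nlinarith [h1, sq_nonneg w, mul_pos hr hv, sq_nonneg (r*v)]
  have hrw2 : r^2 < w^2 := by
    have h0 : u^2 * (v^2*w^2 - r^2*v^2 - r^2*w^2) = 2*r^3*(u*v*w) + r^2*(v^2*w^2) := by
      linear_combination hE
    have hpos : 0 < u^2 * (v^2*w^2 - r^2*v^2 - r^2*w^2) := by rw [h0]; positivity
    have h1 : 0 < v^2*w^2 - r^2*v^2 - r^2*w^2 := by
      by_contra h
      push_neg at h
      nlinarith [hpos, sq_nonneg u]
    nlinarith [h1, sq_nonneg v, mul_pos hr hw, sq_nonneg (r*w)]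
  intro a b c
  set x := Real.sqrt (u ^ 2 - r ^ 2) with hxdef
  set y := Real.sqrt (v ^ 2 - r ^ 2) with hydef
  set z := Real.sqrt (w ^ 2 - r ^ 2) with hzdef
  have hxpos : 0 < x := Real.sqrt_pos.2 (by linarith)
  have hypos : 0 < y := Real.sqrt_pos.2 (by linarith)
  have hzpos : 0 < z := Real.sqrt_pos.2 (by linarith)
  have hx2 : x ^ 2 = u ^ 2 - r ^ 2 := Real.sq_sqrt (by linarith)
  have hy2 : y ^ 2 = v ^ 2 - r ^ 2 := Real.sq_sqrt (by linarith)
  have hz2 : z ^ 2 = w ^ 2 - r ^ 2 := Real.sq_sqrt (by linarith)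
  have ha' : a = y + z := rfl
  have hb' : b = x + z := rfl
  have hc' : c = x + y := rfl
  -- key algebraic identities
  have h5 : u * (y * z) = r * v * w + r ^ 2 * u := by
    apply eq_of_sq_eq' (by positivity) (by positivity)
    linear_combination u^2*z^2*hy2 + u^2*(v^2-r^2)*hz2 + hE
  have h2 : x * (v * w) = r * u * (y + z) := by
    apply eq_of_sq_eq' (by positivity) (by positivity)
    linear_combination v^2*w^2*hx2 - r^2*u^2*hy2 - r^2*u^2*hz2 - 2*r^2*u*h5 + hE
  have hkey : x * y * z = r ^ 2 * (x + y + z) := by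
    apply mul_left_cancel₀ hu'
    linear_combination x*h5 + r*h2
  constructor
  · -- existence
    rw [ha', hb', hc']
    exact exists_triangle' (y + z) (x + z) (x + y) (by linarith) (by linarith) (by linarith)
      (by linarith) (by linarith) (by linarith)
  · intro A B C _ hBC hCA hAB
    rw [ha'] at hBC
    rw [hb'] at hCA
    rw [hc'] at hAB
    have hBCpos : 0 < dist B C := by rw [hBC]; linarith
    have hCApos : 0 < dist C A := by rw [hCA]; linarith
    have hABpos : 0 < dist A B := by rw [hAB]; linarith
    refine ⟨?_, ?_, ?_⟩
    · apply eq_of_sq_eq' dist_nonneg hu.le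
      have e1 := dist_incenter_sq A B C hBCpos hCApos hABpos
      rw [hBC, hCA, hAB] at e1
      rw [e1, div_eq_iff (by positivity : (y + z) + (x + z) + (x + y) ≠ 0)]
      linear_combination 2*hkey + 2*(x+y+z)*hx2
    · apply eq_of_sq_eq' dist_nonneg hv.le
      have e2 := dist_incenter_sq B C A hCApos hABpos hBCpos
      rw [← incenter_cyclic A B C] at e2
      rw [hBC, hCA, hAB] at e2
      rw [e2, div_eq_iff (by positivity : (x + z) + (x + y) + (y + z) ≠ 0)]
      linear_combination 2*hkey + 2*(x+y+z)*hy2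
    · apply eq_of_sq_eq' dist_nonneg hw.le
      have e3 := dist_incenter_sq C A B hABpos hBCpos hCApos
      rw [← incenter_cyclic B C A, ← incenter_cyclic A B C] at e3
      rw [hBC, hCA, hAB] at e3
      rw [e3, div_eq_iff (by positivity : (x + y) + (y + z) + (x + z) ≠ 0)]
      linear_combination 2*hkey + 2*(x+y+z)*hz2
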